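/- Let k be a field of characteristic p with [k:k^p] = p^r, and let l/k be a finite field extension. Then [l:l^p] = p^r and the module of Kähler differentials Ω_{l/k} can be generated by at most r elements as an l-vector space. -/
import Mathlib

open Module

/-- Transport of `finrank` along a compatible pair of ring isomorphisms. -/
lemma finrank_transport' {A : Type*} {B : Type*} {A' : Type*} {B' : Type*}
    [CommRing A] [CommRing B] [CommRing A'] [CommRing B'] [Algebra A B] [Algebra A' B']
    (i : A ≃+* A') (e : B ≃+* B')
    (hc : (algebraMap A' B').comp i.toRingHom = e.toRingHom.comp (algebraMap A B)) :
    Module.finrank A B = Module.finrank A' B' := by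
  have h := Algebra.lift_rank_eq_of_equiv_equiv i e hc
  rw [Module.finrank, Module.finrank, ← Cardinal.toNat_lift (Module.rank A B),
    ← Cardinal.toNat_lift (Module.rank A' B'), h]

/-- A field/ring hom between fields is an isomorphism onto its field range. -/
noncomputable def fieldRangeEquiv {K L : Type*} [Field K] [Field L] (f : K →+* L) :
    K ≃+* f.fieldRange :=
  RingEquiv.ofBijective f.rangeRestrictField
    ⟨fun a b h => f.injective (congrArg Subtype.val h),
     fun y => by obtain ⟨x, hx⟩ := RingHom.mem_fieldRange.mp y.2; exact ⟨x, Subtype.ext hx⟩⟩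

@[simp] lemma fieldRangeEquiv_apply_coe {K L : Type*} [Field K] [Field L] (f : K →+* L) (x : K) :
    (fieldRangeEquiv f x : L) = f x := rfl

open IntermediateField in
/-- If every element of `L` has its `p`-th power in `K` (up to `algebraMap`) and
`[L : K] ≤ p ^ m`, then `L` is generated over `K` by at most `m` elements. -/
lemma exists_adjoin_card_le (p : ℕ) [Fact p.Prime] {L : Type v} [Field L] [CharP L p] (m : ℕ) :
    ∀ (K : Type v) [Field K] [Algebra K L] [FiniteDimensional K L],
      (∀ x : L, ∃ y : K, algebraMap K L y = x ^ p) →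
      Module.finrank K L ≤ p ^ m →
      ∃ s : Finset L, s.card ≤ m ∧ IntermediateField.adjoin K (↑s : Set L) = ⊤ := by
  classical
  have hprime : p.Prime := Fact.out
  induction m with
  | zero =>
    intro K _ _ _ hp hle
    refine ⟨∅, le_refl _, ?_⟩
    have h1 : Module.finrank K L = 1 :=
      le_antisymm (by simpa using hle) Module.finrank_pos
    have hbot : (⊥ : Subalgebra K L) = ⊤ := Subalgebra.bot_eq_top_iff_finrank_eq_one.mpr h1
    rw [eq_top_iff]
    rintro z -
    have hz : z ∈ (⊥ : Subalgebra K L) := hbot ▸ trivial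
    obtain ⟨y, rfl⟩ := Algebra.mem_bot.1 hz
    exact (IntermediateField.adjoin K _).algebraMap_mem y
  | succ m ih =>
    intro K _ _ _ hp hle
    by_cases hsurj : Function.Surjective (algebraMap K L)
    · refine ⟨∅, by simp, ?_⟩
      rw [eq_top_iff]
      rintro z -
      obtain ⟨y, rfl⟩ := hsurj z
      exact (IntermediateField.adjoin K _).algebraMap_mem y
    · unfold Function.Surjective at hsurj
      push_neg at hsurj
      obtain ⟨x, hx⟩ := hsurj
      obtain ⟨c, hc⟩ := hp x
      have hirr : Irreducible (Polynomial.X ^ p - Polynomial.C c) := by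
        refine X_pow_sub_C_irreducible_of_prime hprime ?_
        intro b hb
        refine hx b ?_
        have h1 : (algebraMap K L b) ^ p = x ^ p := by rw [← map_pow, hb, hc]
        exact frobenius_inj L p (by simpa [frobenius_def] using h1)
      have hmin : Polynomial.X ^ p - Polynomial.C c = minpoly K x := by
        refine minpoly.eq_of_irreducible_of_monic hirr ?_
          (Polynomial.monic_X_pow_sub_C c hprime.ne_zero)
        simp [hc, sub_eq_zero]
      have hdeg : Module.finrank K K⟮x⟯ = p := by
        rw [IntermediateField.adjoin.finrank (IsIntegral.of_finite K x), ← hmin,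
          Polynomial.natDegree_X_pow_sub_C]
      haveI hfd : FiniteDimensional (↥K⟮x⟯) L := FiniteDimensional.right K _ L
      have hp' : ∀ z : L, ∃ y : ↥K⟮x⟯, algebraMap (↥K⟮x⟯) L y = z ^ p := by
        intro z
        obtain ⟨y, hy⟩ := hp z
        exact ⟨algebraMap K (↥K⟮x⟯) y, by rw [← IsScalarTower.algebraMap_apply]; exact hy⟩
      have hle' : Module.finrank (↥K⟮x⟯) L ≤ p ^ m := by
        have hmul := Module.finrank_mul_finrank K (↥K⟮x⟯) L
        rw [hdeg] at hmul
        refine Nat.le_of_mul_le_mul_left ?_ hprime.pos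
        rw [hmul]
        calc Module.finrank K L ≤ p ^ (m + 1) := hle
          _ = p * p ^ m := by ring
      obtain ⟨t, htc, htop⟩ := ih (↥K⟮x⟯) hp' hle'
      refine ⟨insert x t, (Finset.card_insert_le _ _).trans (by omega), ?_⟩
      have hadj := IntermediateField.adjoin_adjoin_left K {x} (↑t : Set L)
      rw [htop, IntermediateField.restrictScalars_top] at hadj
      rw [Finset.coe_insert, Set.insert_eq]
      exact hadj.symm

set_option maxHeartbeats 1600000 in
set_option synthInstance.maxHeartbeats 400000 in
/-- Let `k` be a field of characteristic `p` with `[k : kᵖ] = p ^ r`, and `l / k` a finite field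
extension.  Then `[l : lᵖ] = p ^ r` and the module of Kähler differentials `Ω[l⁄k]` can be
generated by at most `r` elements. -/
theorem stmt_4 (p r : ℕ) [Fact p.Prime] (k l : Type*) [Field k] [Field l] [CharP k p] [CharP l p]
    [Algebra k l] [FiniteDimensional k l]
    (hk : Module.finrank (frobenius k p).fieldRange k = p ^ r) :
    Module.finrank (frobenius l p).fieldRange l = p ^ r ∧
      ∃ s : Finset (Ω[l⁄k]), s.card ≤ r ∧ Submodule.span l (s : Set (Ω[l⁄k])) = ⊤ := by
  classical
  have hprime : p.Prime := Fact.out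
  set j : k →+* l := algebraMap k l with hj
  set kp : Subfield k := (frobenius k p).fieldRange with hkp
  set lp : Subfield l := (frobenius l p).fieldRange with hlp
  set K1 : Subfield l := j.fieldRange with hK1
  set K2 : Subfield l := ((frobenius l p).comp K1.subtype).fieldRange with hK2
  -- inclusions
  have h21 : K2 ≤ K1 := by
    rintro _ ⟨a, rfl⟩
    obtain ⟨c, hc⟩ := a.2
    exact ⟨c ^ p, by simp [← hc, frobenius_def, map_pow]⟩
  have h2lp : K2 ≤ lp := by
    rintro _ ⟨a, rfl⟩
    exact ⟨(a : l), rfl⟩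
  letI : Algebra ↥K2 ↥K1 := (Subfield.inclusion h21).toAlgebra
  letI : Algebra ↥K2 ↥lp := (Subfield.inclusion h2lp).toAlgebra
  haveI : IsScalarTower ↥K2 ↥K1 l := IsScalarTower.of_algebraMap_eq fun x => rfl
  haveI : IsScalarTower ↥K2 ↥lp l := IsScalarTower.of_algebraMap_eq fun x => rfl
  -- ring equivalences
  let e1 : k ≃+* ↥K1 := fieldRangeEquiv j
  let e3 : l ≃+* ↥lp := fieldRangeEquiv (frobenius l p)
  let e4 : ↥K1 ≃+* ↥K2 := fieldRangeEquiv ((frobenius l p).comp K1.subtype)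
  have hK2' : (j.comp kp.subtype).fieldRange = K2 := by
    ext y
    constructor
    · rintro ⟨a, rfl⟩
      obtain ⟨c, hc⟩ := a.2
      refine ⟨⟨j c, ⟨c, rfl⟩⟩, ?_⟩
      simp [← hc, frobenius_def, map_pow]
    · rintro ⟨a, rfl⟩
      obtain ⟨c, hc⟩ := a.2
      refine ⟨⟨frobenius k p c, ⟨c, rfl⟩⟩, ?_⟩
      simp [← hc, frobenius_def, map_pow]
  let e2 : ↥kp ≃+* ↥K2 :=
    (fieldRangeEquiv (j.comp kp.subtype)).trans (RingEquiv.subfieldCongr hK2')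
  -- finrank transports
  have f3 : Module.finrank k l = Module.finrank ↥K1 l := by
    refine finrank_transport' e1 (RingEquiv.refl l) ?_
    ext c
    rfl
  have f5 : Module.finrank ↥kp k = Module.finrank ↥K2 ↥K1 := by
    refine finrank_transport' e2 e1 ?_
    ext c
    rfl
  have f6 : Module.finrank ↥K1 l = Module.finrank ↥K2 ↥lp := by
    refine finrank_transport' e4 e3 ?_
    ext c
    rfl
  have t1 : Module.finrank ↥K2 ↥K1 * Module.finrank ↥K1 l = Module.finrank ↥K2 l :=
    Module.finrank_mul_finrank _ _ _
  have t2 : Module.finrank ↥K2 ↥lp * Module.finrank ↥lp l = Module.finrank ↥K2 l :=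
    Module.finrank_mul_finrank _ _ _
  have npos : 0 < Module.finrank k l := Module.finrank_pos
  have part1 : Module.finrank ↥lp l = p ^ r := by
    refine Nat.eq_of_mul_eq_mul_left npos ?_
    calc Module.finrank k l * Module.finrank ↥lp l
        = Module.finrank ↥K2 ↥lp * Module.finrank ↥lp l := by rw [← f6, ← f3]
      _ = Module.finrank ↥K2 l := t2
      _ = Module.finrank ↥K2 ↥K1 * Module.finrank ↥K1 l := t1.symm
      _ = (p ^ r) * Module.finrank k l := by rw [← f5, hk, f3]
      _ = Module.finrank k l * p ^ r := by ring
  refine ⟨part1, ?_⟩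
  -- part 2
  haveI hfdlp : FiniteDimensional ↥lp l :=
    FiniteDimensional.of_finrank_pos (by rw [part1]; exact pow_pos hprime.pos r)
  set E : IntermediateField ↥lp l := IntermediateField.adjoin ↥lp (Set.range j) with hE
  haveI : FiniteDimensional ↥E l := FiniteDimensional.right ↥lp ↥E l
  have hEle : Module.finrank ↥E l ≤ p ^ r := by
    have hm := Module.finrank_mul_finrank ↥lp ↥E l
    refine Nat.le_of_dvd (pow_pos hprime.pos r) ?_
    exact ⟨Module.finrank ↥lp ↥E, by rw [← part1, ← hm, mul_comm]⟩
  have hpE : ∀ x : l, ∃ y : ↥E, algebraMap ↥E l y = x ^ p := by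
    intro x
    have hmem : x ^ p ∈ lp := ⟨x, by rw [frobenius_def]⟩
    have : algebraMap ↥lp l ⟨x ^ p, hmem⟩ ∈ E := E.algebraMap_mem _
    exact ⟨⟨x ^ p, this⟩, rfl⟩
  obtain ⟨s', hs'c, hs'top⟩ := exists_adjoin_card_le p r ↥E hpE hEle
  refine ⟨s'.image (KaehlerDifferential.D k l), Finset.card_image_le.trans hs'c, ?_⟩
  rw [eq_top_iff, ← KaehlerDifferential.span_range_derivation k l, Submodule.span_le]
  rintro _ ⟨a, rfl⟩
  set W : Submodule l (Ω[l⁄k]) :=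
    Submodule.span l (↑(s'.image (KaehlerDifferential.D k l)) : Set (Ω[l⁄k])) with hW
  show KaehlerDifferential.D k l a ∈ W
  have hDp : ∀ u : l, KaehlerDifferential.D k l (u ^ p) = 0 := by
    intro u
    rw [Derivation.leibniz_pow, ← Nat.cast_smul_eq_nsmul l, CharP.cast_eq_zero l p, zero_smul]
  have hmul : ∀ x y : l, KaehlerDifferential.D k l x ∈ W → KaehlerDifferential.D k l y ∈ W →
      KaehlerDifferential.D k l (x * y) ∈ W := by
    intro x y hx hy
    rw [Derivation.leibniz]
    exact W.add_mem (W.smul_mem _ hy) (W.smul_mem _ hx)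
  have hinv : ∀ x : l, KaehlerDifferential.D k l x ∈ W → KaehlerDifferential.D k l x⁻¹ ∈ W := by
    intro x hx
    rw [Derivation.leibniz_inv]
    exact W.smul_mem _ hx
  have hbase0 : ∀ w : l, w ∈ IntermediateField.adjoin ↥lp (Set.range j) →
      KaehlerDifferential.D k l w ∈ W := by
    intro w hw
    refine IntermediateField.adjoin_induction
      (p := fun x _ => KaehlerDifferential.D k l x ∈ W) ↥lp ?_ ?_ ?_ ?_ ?_ hw
    · rintro _ ⟨c, rfl⟩
      rw [hj, Derivation.map_algebraMap]
      exact W.zero_mem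
    · intro y
      obtain ⟨u, hu⟩ := y.2
      have hy : algebraMap ↥lp l y = u ^ p := by
        rw [← frobenius_def, hu]
        rfl
      rw [hy, hDp]
      exact W.zero_mem
    · intro x y _ _ hx hy
      rw [map_add]
      exact W.add_mem hx hy
    · intro x _ hx
      exact hinv x hx
    · intro x y _ _ hx hy
      exact hmul x y hx hy
  have ha : a ∈ IntermediateField.adjoin ↥E (↑s' : Set l) := by
    rw [hs'top]
    trivial
  have hbase : ∀ z : ↥E, KaehlerDifferential.D k l (algebraMap ↥E l z) ∈ W :=
    fun z => hbase0 _ z.2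
  refine IntermediateField.adjoin_induction
    (p := fun x _ => KaehlerDifferential.D k l x ∈ W) ↥E ?_ hbase ?_ ?_ ?_ ha
  · intro x hx
    exact Submodule.subset_span (by
      rw [Finset.coe_image]
      exact Set.mem_image_of_mem _ hx)
  · intro x y _ _ hx hy
    rw [map_add]
    exact W.add_mem hx hy
  · intro x _ hx
    exact hinv x hx
  · intro x y _ _ hx hy
    exact hmul x y hx hy
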